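/- Let N ≥ 2, 1 ≤ C < N, L = N − C + 1, and let q ∈ Δ_N°. Define p(θ) = u + θ(q − u). Then for every θ with 0 < θ ≤ 1, (d/dθ) H_C(p(θ)) = (1/(Nθ)) · Σ_{1 ≤ a < b ≤ N} (p_a(θ) − p_b(θ))² · K_{ab}^{(C)}(p(θ)), where K_{ab}^{(C)}(p) = N · Σ_{R ⊆ {1,…,N}, {a,b} ⊆ R, |R| ≥ L} (−1)^{|R|−L} binom(|R|−2, |R|−L) · ( 1/(|R| p_R) + 1/(N p_R²) ). -/

import Mathlib

open Finset

/-- The exact stationary LRU hit rate, given by the residual-subset formula. -/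
noncomputable def hitRate (N C : ℕ) (p : Fin N → ℝ) : ℝ :=
  ∑ m ∈ Finset.Icc (N - C + 1) N,
    (-1 : ℝ) ^ (m - (N - C + 1)) * ((m - 2).choose (m - (N - C + 1)) : ℝ) *
      ∑ R ∈ (Finset.univ : Finset (Fin N)).powersetCard m,
        (∑ i ∈ R, p i ^ 2) / (∑ i ∈ R, p i)

/-- The pair kernel `K_{ab}^{(C)}(p)`. -/
noncomputable def pairKernel (N C : ℕ) (a b : Fin N) (p : Fin N → ℝ) : ℝ :=
  (N : ℝ) *
    ∑ R ∈ (Finset.univ : Finset (Fin N)).powerset.filter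
        (fun R => a ∈ R ∧ b ∈ R ∧ N - C + 1 ≤ R.card),
      (-1 : ℝ) ^ (R.card - (N - C + 1)) *
        ((R.card - 2).choose (R.card - (N - C + 1)) : ℝ) *
        (1 / ((R.card : ℝ) * ∑ i ∈ R, p i) + 1 / ((N : ℝ) * (∑ i ∈ R, p i) ^ 2))

/-- Positive pair-kernel derivative formula: along the radial path
`p(θ) = u + θ(q - u)`, for `0 < θ ≤ 1`,
`(d/dθ) H_C(p(θ)) = (1/(Nθ)) Σ_{a<b} (p_a(θ) - p_b(θ))² K_{ab}^{(C)}(p(θ))`. -/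

lemma alg_identity (Q S W V θ n mm : ℝ) (hS : S ≠ 0) (hθ : θ ≠ 0) (hn : n ≠ 0) (hm : mm ≠ 0)
    (hW : θ * W = 2 * Q - 2 * S * n⁻¹) (hV : θ * V = S - mm * n⁻¹) :
    (W * S - Q * V) / S ^ 2
      = 1 / θ * ((mm * Q - S ^ 2) * (1 / (mm * S) + 1 / (n * S ^ 2)))
        + 1 / θ * (S / mm - n⁻¹) := by
  have hW' : W = (2 * Q - 2 * S * n⁻¹) / θ := by rw [eq_div_iff hθ]; linarith
  have hV' : V = (S - mm * n⁻¹) / θ := by rw [eq_div_iff hθ]; linarith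
  rw [hW', hV']
  field_simp
  ring

lemma nat_choose_mul (N m : ℕ) (hN : 1 ≤ N) (hm : 1 ≤ m) :
    N * (N - 1).choose (m - 1) = N.choose m * m := by
  obtain ⟨n, rfl⟩ : ∃ n, N = n + 1 := ⟨N - 1, by omega⟩
  obtain ⟨k, rfl⟩ : ∃ k, m = k + 1 := ⟨m - 1, by omega⟩
  simpa using Nat.add_one_mul_choose_eq n k

lemma sum_filter_card_eq (N L' : ℕ) (F : Finset (Fin N) → ℝ) :
    ∑ R ∈ (univ : Finset (Fin N)).powerset.filter (fun R => L' ≤ R.card), F R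
      = ∑ m ∈ Finset.Icc L' N, ∑ R ∈ (univ : Finset (Fin N)).powersetCard m, F R := by
  have hmaps : ∀ R ∈ (univ : Finset (Fin N)).powerset.filter (fun R => L' ≤ R.card),
      R.card ∈ Finset.Icc L' N := by
    intro R hR
    simp only [mem_filter, mem_powerset] at hR
    simp only [mem_Icc]
    refine ⟨hR.2, ?_⟩
    calc R.card ≤ (univ : Finset (Fin N)).card := Finset.card_le_card hR.1
      _ = N := by rw [card_univ, Fintype.card_fin]
  rw [← Finset.sum_fiberwise_of_maps_to hmaps F]
  apply Finset.sum_congr rfl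
  intro m hm
  apply Finset.sum_congr ?_ (fun _ _ => rfl)
  rw [Finset.filter_filter, powersetCard_eq_filter]
  apply Finset.filter_congr
  intro R _
  simp only [mem_Icc] at hm
  constructor
  · exact fun h => h.2
  · intro h; omega

lemma count_contain (N m : ℕ) (hm : 1 ≤ m) (i : Fin N) :
    (((univ : Finset (Fin N)).powersetCard m).filter (fun R => i ∈ R)).card
      = (N - 1).choose (m - 1) := by
  have : (((univ : Finset (Fin N)).powersetCard m).filter (fun R => i ∈ R)).card
      = ((univ.erase i).powersetCard (m - 1)).card := by
    apply Finset.card_nbij' (fun R => R.erase i) (fun S => insert i S)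
    · intro R hR
      simp only [Finset.mem_coe, mem_filter, mem_powersetCard] at hR
      simp only [Finset.mem_coe, mem_powersetCard]
      constructor
      · intro x hx; simp only [mem_erase] at hx ⊢; exact ⟨hx.1, mem_univ _⟩
      · rw [Finset.card_erase_of_mem hR.2, hR.1.2]
    · intro S hS
      simp only [Finset.mem_coe, mem_powersetCard] at hS
      have hiS : i ∉ S := fun h => (Finset.mem_erase.1 (hS.1 h)).1 rfl
      simp only [Finset.mem_coe, mem_filter, mem_powersetCard]
      refine ⟨⟨fun x _ => mem_univ _, ?_⟩, mem_insert_self _ _⟩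
      rw [Finset.card_insert_of_notMem hiS, hS.2]
      omega
    · intro R hR
      simp only [Finset.mem_coe, mem_filter] at hR
      exact Finset.insert_erase hR.2
    · intro S hS
      simp only [Finset.mem_coe, mem_powersetCard] at hS
      have hiS : i ∉ S := fun h => (Finset.mem_erase.1 (hS.1 h)).1 rfl
      exact Finset.erase_insert hiS
  rw [this, Finset.card_powersetCard, Finset.card_erase_of_mem (mem_univ i), card_univ,
    Fintype.card_fin]

lemma sum_over_subsets (N m : ℕ) (hm : 1 ≤ m) (f : Fin N → ℝ) :
    ∑ R ∈ (univ : Finset (Fin N)).powersetCard m, ∑ i ∈ R, f i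
      = ((N - 1).choose (m - 1) : ℝ) * ∑ i, f i := by
  have h1 : ∀ R ∈ (univ : Finset (Fin N)).powersetCard m,
      ∑ i ∈ R, f i = ∑ i : Fin N, if i ∈ R then f i else 0 := by
    intro R _
    rw [Finset.sum_ite_mem, Finset.univ_inter]
  rw [Finset.sum_congr rfl h1, Finset.sum_comm, Finset.mul_sum]
  refine Finset.sum_congr rfl fun i _ => ?_
  rw [← Finset.sum_filter, Finset.sum_const, count_contain N m hm, nsmul_eq_mul]

lemma cancel_sum (N m : ℕ) (hN : 1 ≤ N) (hm1 : 1 ≤ m) (p : Fin N → ℝ)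
    (hp : ∑ i, p i = 1) :
    ∑ R ∈ (univ : Finset (Fin N)).powersetCard m,
      ((∑ i ∈ R, p i) / (m : ℝ) - (N : ℝ)⁻¹) = 0 := by
  rw [Finset.sum_sub_distrib, Finset.sum_const, Finset.card_powersetCard, card_univ,
    Fintype.card_fin, ← Finset.sum_div, sum_over_subsets N m hm1, hp, mul_one, nsmul_eq_mul]
  have hcast : (N : ℝ) * ((N - 1).choose (m - 1) : ℝ) = (N.choose m : ℝ) * m := by
    exact_mod_cast nat_choose_mul N m hN hm1
  have hm0 : (m : ℝ) ≠ 0 := Nat.cast_ne_zero.2 (by omega)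
  have hN0 : (N : ℝ) ≠ 0 := Nat.cast_ne_zero.2 (by omega)
  field_simp
  linarith [hcast]

lemma pair_square_sum (N : ℕ) (p : Fin N → ℝ) (R : Finset (Fin N)) :
    ∑ ab ∈ ((univ : Finset (Fin N × Fin N)).filter fun ab => ab.1 < ab.2).filter
        (fun ab => ab.1 ∈ R ∧ ab.2 ∈ R), (p ab.1 - p ab.2) ^ 2
      = (R.card : ℝ) * (∑ i ∈ R, p i ^ 2) - (∑ i ∈ R, p i) ^ 2 := by
  set w : Fin N × Fin N → ℝ := fun ab => (p ab.1 - p ab.2) ^ 2 with hw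
  have hset : ((univ : Finset (Fin N × Fin N)).filter fun ab => ab.1 < ab.2).filter
      (fun ab => ab.1 ∈ R ∧ ab.2 ∈ R) = (R ×ˢ R).filter (fun ab => ab.1 < ab.2) := by
    ext ab; simp [and_comm, and_assoc, and_left_comm]
  have hfull : ∑ ab ∈ R ×ˢ R, w ab
      = 2 * ((R.card : ℝ) * (∑ i ∈ R, p i ^ 2) - (∑ i ∈ R, p i) ^ 2) := by
    rw [Finset.sum_product]
    have : ∀ a ∈ R, ∑ b ∈ R, w (a, b)
        = (R.card : ℝ) * p a ^ 2 - 2 * p a * (∑ i ∈ R, p i) + ∑ i ∈ R, p i ^ 2 := by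
      intro a _
      have : ∀ b ∈ R, w (a, b) = p a ^ 2 - 2 * p a * p b + p b ^ 2 := by
        intro b _; simp only [hw]; ring
      rw [Finset.sum_congr rfl this]
      simp only [Finset.sum_add_distrib, Finset.sum_sub_distrib, Finset.sum_const,
        nsmul_eq_mul, ← Finset.mul_sum, ← Finset.sum_mul]
      try ring
    rw [Finset.sum_congr rfl this]
    simp only [Finset.sum_add_distrib, Finset.sum_sub_distrib, Finset.sum_const,
      nsmul_eq_mul, ← Finset.mul_sum, ← Finset.sum_mul]
    ring
  have hswap : ∑ ab ∈ (R ×ˢ R).filter (fun ab => ab.2 < ab.1), w ab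
      = ∑ ab ∈ (R ×ˢ R).filter (fun ab => ab.1 < ab.2), w ab := by
    apply Finset.sum_nbij' (fun ab => Prod.swap ab) (fun ab => Prod.swap ab)
    · intro ab hab; simp only [mem_filter, mem_product] at hab ⊢
      exact ⟨⟨hab.1.2, hab.1.1⟩, hab.2⟩
    · intro ab hab; simp only [mem_filter, mem_product] at hab ⊢
      exact ⟨⟨hab.1.2, hab.1.1⟩, hab.2⟩
    · intro ab _; simp
    · intro ab _; simp
    · intro ab _; simp only [hw]; ring_nf; rw [Prod.fst_swap, Prod.snd_swap]; ring
  have hdiag : ∑ ab ∈ ((R ×ˢ R).filter fun ab => ¬ ab.1 < ab.2), w ab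
      = ∑ ab ∈ (R ×ˢ R).filter (fun ab => ab.2 < ab.1), w ab := by
    rw [← Finset.sum_filter_add_sum_filter_not
      ((R ×ˢ R).filter fun ab => ¬ ab.1 < ab.2) (fun ab => ab.2 < ab.1) w]
    have h1 : ((R ×ˢ R).filter fun ab => ¬ ab.1 < ab.2).filter (fun ab => ab.2 < ab.1)
        = (R ×ˢ R).filter (fun ab => ab.2 < ab.1) := by
      rw [Finset.filter_filter]
      apply Finset.filter_congr
      intro ab _
      constructor
      · exact fun h => h.2
      · exact fun h => ⟨asymm h, h⟩
    have h2 : ∑ ab ∈ ((R ×ˢ R).filter fun ab => ¬ ab.1 < ab.2).filter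
        (fun ab => ¬ ab.2 < ab.1), w ab = 0 := by
      apply Finset.sum_eq_zero
      intro ab hab
      simp only [mem_filter] at hab
      have : ab.1 = ab.2 := le_antisymm (not_lt.1 hab.2) (not_lt.1 hab.1.2)
      simp [hw, this]
    rw [h1, h2, add_zero]
  have := Finset.sum_filter_add_sum_filter_not (R ×ˢ R) (fun ab => ab.1 < ab.2) w
  rw [hdiag, hswap, ← two_mul] at this
  rw [hset]
  linarith [hfull, this]

noncomputable def pt (N : ℕ) (q : Fin N → ℝ) (t : ℝ) (i : Fin N) : ℝ :=
  (N : ℝ)⁻¹ + t * (q i - (N : ℝ)⁻¹)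


lemma hasDerivAt_ratio (N : ℕ) (q : Fin N → ℝ) (θ : ℝ) (R : Finset (Fin N))
    (hS : (∑ i ∈ R, pt N q θ i) ≠ 0) :
    HasDerivAt
      (fun t : ℝ => (∑ i ∈ R, pt N q t i ^ 2) / (∑ i ∈ R, pt N q t i))
      (((∑ i ∈ R, 2 * pt N q θ i * (q i - (N:ℝ)⁻¹)) * (∑ i ∈ R, pt N q θ i) -
        (∑ i ∈ R, pt N q θ i ^ 2) * (∑ i ∈ R, (q i - (N:ℝ)⁻¹))) /
        (∑ i ∈ R, pt N q θ i) ^ 2) θ := by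
  have hp : ∀ i : Fin N, HasDerivAt (fun t : ℝ => pt N q t i) (q i - (N:ℝ)⁻¹) θ := by
    intro i
    simpa [pt] using ((hasDerivAt_id θ).mul_const (q i - (N:ℝ)⁻¹)).const_add (N:ℝ)⁻¹
  have hnum : HasDerivAt (fun t : ℝ => ∑ i ∈ R, pt N q t i ^ 2)
      (∑ i ∈ R, 2 * pt N q θ i * (q i - (N:ℝ)⁻¹)) θ := by
    apply HasDerivAt.fun_sum
    intro i _
    have := (hp i).fun_pow 2
    simpa [mul_comm, mul_assoc, mul_left_comm] using this
  have hden : HasDerivAt (fun t : ℝ => ∑ i ∈ R, pt N q t i)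
      (∑ i ∈ R, (q i - (N:ℝ)⁻¹)) θ := HasDerivAt.fun_sum (fun i _ => hp i)
  exact hnum.div hden hS

lemma hasDerivAt_hitRate (N C : ℕ) (q : Fin N → ℝ) (θ : ℝ)
    (hS : ∀ m ∈ Finset.Icc (N - C + 1) N, ∀ R ∈ (univ : Finset (Fin N)).powersetCard m,
      (∑ i ∈ R, pt N q θ i) ≠ 0) :
    HasDerivAt (fun t : ℝ => hitRate N C (pt N q t))
      (∑ m ∈ Finset.Icc (N - C + 1) N,
        (-1 : ℝ) ^ (m - (N - C + 1)) * ((m - 2).choose (m - (N - C + 1)) : ℝ) *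
          ∑ R ∈ (univ : Finset (Fin N)).powersetCard m,
            ((∑ i ∈ R, 2 * pt N q θ i * (q i - (N:ℝ)⁻¹)) * (∑ i ∈ R, pt N q θ i) -
              (∑ i ∈ R, pt N q θ i ^ 2) * (∑ i ∈ R, (q i - (N:ℝ)⁻¹))) /
              (∑ i ∈ R, pt N q θ i) ^ 2) θ := by
  simp only [hitRate]
  apply HasDerivAt.fun_sum
  intro m hm
  apply HasDerivAt.const_mul
  apply HasDerivAt.fun_sum
  intro R hR
  exact hasDerivAt_ratio N q θ R (hS m hm R hR)


theorem radial_derivative_formula (N C : ℕ) (hN : 2 ≤ N) (hC1 : 1 ≤ C) (hCN : C < N)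
    (q : Fin N → ℝ) (hqpos : ∀ i, 0 < q i) (hqsum : ∑ i, q i = 1)
    (θ : ℝ) (hθ : θ ∈ Set.Ioc (0 : ℝ) 1) :
    deriv (fun θ : ℝ => hitRate N C (fun i => (N : ℝ)⁻¹ + θ * (q i - (N : ℝ)⁻¹))) θ =
      (1 / ((N : ℝ) * θ)) *
        ∑ ab ∈ (Finset.univ : Finset (Fin N × Fin N)).filter (fun ab => ab.1 < ab.2),
          (((N : ℝ)⁻¹ + θ * (q ab.1 - (N : ℝ)⁻¹)) - ((N : ℝ)⁻¹ + θ * (q ab.2 - (N : ℝ)⁻¹))) ^ 2 *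
            pairKernel N C ab.1 ab.2 (fun i => (N : ℝ)⁻¹ + θ * (q i - (N : ℝ)⁻¹)) := by
  obtain ⟨hθ0, hθ1⟩ := hθ
  have hθne : θ ≠ 0 := ne_of_gt hθ0
  have hN1 : 1 ≤ N := by omega
  have hN0 : (N : ℝ) ≠ 0 := Nat.cast_ne_zero.2 (by omega)
  have hppos : ∀ i, 0 < pt N q θ i := by
    intro i
    have h1 : pt N q θ i = (1 - θ) * (N : ℝ)⁻¹ + θ * q i := by simp only [pt]; ring
    have h2 : 0 ≤ (1 - θ) * (N : ℝ)⁻¹ := by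
      apply mul_nonneg (by linarith)
      positivity
    have h3 : 0 < θ * q i := mul_pos hθ0 (hqpos i)
    rw [h1]; linarith
  have hpsum : ∑ i, pt N q θ i = 1 := by
    simp only [pt]
    rw [Finset.sum_add_distrib, ← Finset.mul_sum, Finset.sum_sub_distrib, Finset.sum_const,
      card_univ, Fintype.card_fin, hqsum, nsmul_eq_mul]
    field_simp
    ring
  -- membership facts
  have hmemR : ∀ m ∈ Finset.Icc (N - C + 1) N, ∀ R ∈ (univ : Finset (Fin N)).powersetCard m,
      R.card = m ∧ 1 ≤ m ∧ 0 < ∑ i ∈ R, pt N q θ i := by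
    intro m hm R hR
    rw [mem_Icc] at hm
    rw [mem_powersetCard] at hR
    have hm1 : 1 ≤ m := by omega
    have hRne : R.Nonempty := by
      rw [← Finset.card_pos, hR.2]; omega
    exact ⟨hR.2, hm1, Finset.sum_pos (fun i _ => hppos i) hRne⟩
  have hSne : ∀ m ∈ Finset.Icc (N - C + 1) N, ∀ R ∈ (univ : Finset (Fin N)).powersetCard m,
      (∑ i ∈ R, pt N q θ i) ≠ 0 := fun m hm R hR => ne_of_gt (hmemR m hm R hR).2.2
  show deriv (fun t : ℝ => hitRate N C (pt N q t)) θ =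
      (1 / ((N : ℝ) * θ)) *
        ∑ ab ∈ (Finset.univ : Finset (Fin N × Fin N)).filter (fun ab => ab.1 < ab.2),
          (pt N q θ ab.1 - pt N q θ ab.2) ^ 2 * pairKernel N C ab.1 ab.2 (pt N q θ)
  rw [(hasDerivAt_hitRate N C q θ hSne).deriv]
  -- Step 1: rewrite the derivative sum
  have hDstep : ∀ m ∈ Finset.Icc (N - C + 1) N,
      ∑ R ∈ (univ : Finset (Fin N)).powersetCard m,
        ((∑ i ∈ R, 2 * pt N q θ i * (q i - (N:ℝ)⁻¹)) * (∑ i ∈ R, pt N q θ i) -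
          (∑ i ∈ R, pt N q θ i ^ 2) * (∑ i ∈ R, (q i - (N:ℝ)⁻¹))) /
          (∑ i ∈ R, pt N q θ i) ^ 2
      = ∑ R ∈ (univ : Finset (Fin N)).powersetCard m,
          1 / θ * (((m:ℝ) * ∑ i ∈ R, pt N q θ i ^ 2 - (∑ i ∈ R, pt N q θ i) ^ 2) *
            (1 / ((m:ℝ) * ∑ i ∈ R, pt N q θ i) + 1 / ((N:ℝ) * (∑ i ∈ R, pt N q θ i) ^ 2))) := by
    intro m hm
    have h1 : ∀ R ∈ (univ : Finset (Fin N)).powersetCard m,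
        ((∑ i ∈ R, 2 * pt N q θ i * (q i - (N:ℝ)⁻¹)) * (∑ i ∈ R, pt N q θ i) -
          (∑ i ∈ R, pt N q θ i ^ 2) * (∑ i ∈ R, (q i - (N:ℝ)⁻¹))) /
          (∑ i ∈ R, pt N q θ i) ^ 2
        = 1 / θ * (((m:ℝ) * ∑ i ∈ R, pt N q θ i ^ 2 - (∑ i ∈ R, pt N q θ i) ^ 2) *
            (1 / ((m:ℝ) * ∑ i ∈ R, pt N q θ i) + 1 / ((N:ℝ) * (∑ i ∈ R, pt N q θ i) ^ 2)))
          + 1 / θ * ((∑ i ∈ R, pt N q θ i) / (m:ℝ) - (N:ℝ)⁻¹) := by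
      intro R hR
      obtain ⟨hcard, hm1, hSpos⟩ := hmemR m hm R hR
      have hm0 : (m : ℝ) ≠ 0 := Nat.cast_ne_zero.2 (by omega)
      have hW : θ * (∑ i ∈ R, 2 * pt N q θ i * (q i - (N:ℝ)⁻¹))
          = 2 * (∑ i ∈ R, pt N q θ i ^ 2) - 2 * (∑ i ∈ R, pt N q θ i) * (N:ℝ)⁻¹ := by
        rw [Finset.mul_sum]
        have hpoint : ∀ i ∈ R, θ * (2 * pt N q θ i * (q i - (N:ℝ)⁻¹))
            = 2 * pt N q θ i ^ 2 - 2 * pt N q θ i * (N:ℝ)⁻¹ := by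
          intro i _; simp only [pt]; ring
        rw [Finset.sum_congr rfl hpoint, Finset.sum_sub_distrib, ← Finset.mul_sum]
        congr 1
        have hpoint2 : ∀ i ∈ R, 2 * pt N q θ i * (N:ℝ)⁻¹ = pt N q θ i * (2 * (N:ℝ)⁻¹) := by
          intro i _; ring
        rw [Finset.sum_congr rfl hpoint2, ← Finset.sum_mul]
        ring
      have hV : θ * (∑ i ∈ R, (q i - (N:ℝ)⁻¹))
          = (∑ i ∈ R, pt N q θ i) - (m:ℝ) * (N:ℝ)⁻¹ := by
        rw [Finset.mul_sum]
        have hpoint : ∀ i ∈ R, θ * (q i - (N:ℝ)⁻¹) = pt N q θ i - (N:ℝ)⁻¹ := by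
          intro i _; simp only [pt]; ring
        rw [Finset.sum_congr rfl hpoint, Finset.sum_sub_distrib, Finset.sum_const, hcard,
          nsmul_eq_mul]
      exact alg_identity _ _ _ _ θ _ _ (ne_of_gt hSpos) hθne hN0 hm0 hW hV
    rw [Finset.sum_congr rfl h1, Finset.sum_add_distrib, ← Finset.mul_sum, ← Finset.mul_sum]
    have hm1 : 1 ≤ m := by rw [mem_Icc] at hm; omega
    rw [cancel_sum N m hN1 hm1 (pt N q θ) hpsum, mul_zero, add_zero]
  rw [Finset.sum_congr rfl (fun m hm => by rw [hDstep m hm])]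
  -- Step 2: transform RHS
  set g : Finset (Fin N) → ℝ := fun R =>
    (-1 : ℝ) ^ (R.card - (N - C + 1)) * ((R.card - 2).choose (R.card - (N - C + 1)) : ℝ) *
      (1 / ((R.card : ℝ) * ∑ i ∈ R, pt N q θ i) +
        1 / ((N : ℝ) * (∑ i ∈ R, pt N q θ i) ^ 2)) with hg
  have hstep1 : ∀ ab : Fin N × Fin N,
      (pt N q θ ab.1 - pt N q θ ab.2) ^ 2 * pairKernel N C ab.1 ab.2 (pt N q θ)
      = ∑ R ∈ (univ : Finset (Fin N)).powerset,
          (if ab.1 ∈ R ∧ ab.2 ∈ R ∧ N - C + 1 ≤ R.card then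
            (N : ℝ) * ((pt N q θ ab.1 - pt N q θ ab.2) ^ 2 * g R) else 0) := by
    intro ab
    rw [pairKernel, Finset.sum_filter, Finset.mul_sum, Finset.mul_sum]
    apply Finset.sum_congr rfl
    intro R _
    by_cases hc : ab.1 ∈ R ∧ ab.2 ∈ R ∧ N - C + 1 ≤ R.card
    · rw [if_pos hc, if_pos hc]
      simp only [hg]
      ring
    · rw [if_neg hc, if_neg hc, mul_zero, mul_zero]
  have hRHS : ∑ ab ∈ (Finset.univ : Finset (Fin N × Fin N)).filter (fun ab => ab.1 < ab.2),
      (pt N q θ ab.1 - pt N q θ ab.2) ^ 2 * pairKernel N C ab.1 ab.2 (pt N q θ)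
      = ∑ m ∈ Finset.Icc (N - C + 1) N, ∑ R ∈ (univ : Finset (Fin N)).powersetCard m,
          (N : ℝ) * (g R * ((m:ℝ) * (∑ i ∈ R, pt N q θ i ^ 2) - (∑ i ∈ R, pt N q θ i) ^ 2)) := by
    calc ∑ ab ∈ (Finset.univ : Finset (Fin N × Fin N)).filter (fun ab => ab.1 < ab.2),
        (pt N q θ ab.1 - pt N q θ ab.2) ^ 2 * pairKernel N C ab.1 ab.2 (pt N q θ)
        = ∑ ab ∈ (Finset.univ : Finset (Fin N × Fin N)).filter (fun ab => ab.1 < ab.2),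
            ∑ R ∈ (univ : Finset (Fin N)).powerset,
              (if ab.1 ∈ R ∧ ab.2 ∈ R ∧ N - C + 1 ≤ R.card then
                (N : ℝ) * ((pt N q θ ab.1 - pt N q θ ab.2) ^ 2 * g R) else 0) :=
          Finset.sum_congr rfl (fun ab _ => hstep1 ab)
      _ = ∑ R ∈ (univ : Finset (Fin N)).powerset,
            ∑ ab ∈ (Finset.univ : Finset (Fin N × Fin N)).filter (fun ab => ab.1 < ab.2),
              (if ab.1 ∈ R ∧ ab.2 ∈ R ∧ N - C + 1 ≤ R.card then
                (N : ℝ) * ((pt N q θ ab.1 - pt N q θ ab.2) ^ 2 * g R) else 0) :=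
          Finset.sum_comm
      _ = ∑ R ∈ (univ : Finset (Fin N)).powerset,
            (if N - C + 1 ≤ R.card then
              (N : ℝ) * (g R *
                ∑ ab ∈ ((Finset.univ : Finset (Fin N × Fin N)).filter
                    (fun ab => ab.1 < ab.2)).filter (fun ab => ab.1 ∈ R ∧ ab.2 ∈ R),
                  (pt N q θ ab.1 - pt N q θ ab.2) ^ 2) else 0) := by
          apply Finset.sum_congr rfl
          intro R _
          by_cases hc : N - C + 1 ≤ R.card
          · rw [if_pos hc]
            conv_rhs => rw [Finset.sum_filter, Finset.mul_sum, Finset.mul_sum]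
            apply Finset.sum_congr rfl
            intro ab _
            by_cases hab : ab.1 ∈ R ∧ ab.2 ∈ R
            · rw [if_pos ⟨hab.1, hab.2, hc⟩, if_pos hab]; ring
            · rw [if_neg (by tauto), if_neg hab, mul_zero, mul_zero]
          · rw [if_neg hc]
            apply Finset.sum_eq_zero
            intro ab _
            rw [if_neg (by tauto)]
      _ = ∑ R ∈ (univ : Finset (Fin N)).powerset.filter (fun R => N - C + 1 ≤ R.card),
            (N : ℝ) * (g R *
              ∑ ab ∈ ((Finset.univ : Finset (Fin N × Fin N)).filter
                  (fun ab => ab.1 < ab.2)).filter (fun ab => ab.1 ∈ R ∧ ab.2 ∈ R),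
                (pt N q θ ab.1 - pt N q θ ab.2) ^ 2) := (Finset.sum_filter _ _).symm
      _ = ∑ m ∈ Finset.Icc (N - C + 1) N, ∑ R ∈ (univ : Finset (Fin N)).powersetCard m,
            (N : ℝ) * (g R *
              ∑ ab ∈ ((Finset.univ : Finset (Fin N × Fin N)).filter
                  (fun ab => ab.1 < ab.2)).filter (fun ab => ab.1 ∈ R ∧ ab.2 ∈ R),
                (pt N q θ ab.1 - pt N q θ ab.2) ^ 2) := sum_filter_card_eq N (N - C + 1) _
      _ = ∑ m ∈ Finset.Icc (N - C + 1) N, ∑ R ∈ (univ : Finset (Fin N)).powersetCard m,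
            (N : ℝ) * (g R * ((m:ℝ) * (∑ i ∈ R, pt N q θ i ^ 2) - (∑ i ∈ R, pt N q θ i) ^ 2)) := by
          apply Finset.sum_congr rfl
          intro m hm
          apply Finset.sum_congr rfl
          intro R hR
          rw [pair_square_sum N (pt N q θ) R, (mem_powersetCard.1 hR).2]
  rw [hRHS, Finset.mul_sum]
  apply Finset.sum_congr rfl
  intro m hm
  rw [Finset.mul_sum, Finset.mul_sum]
  apply Finset.sum_congr rfl
  intro R hR
  obtain ⟨hcard, hm1, hSpos⟩ := hmemR m hm R hR
  have hm0 : (m : ℝ) ≠ 0 := Nat.cast_ne_zero.2 (by omega)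
  simp only [hg, hcard]
  have hSne' : (∑ i ∈ R, pt N q θ i) ≠ 0 := ne_of_gt hSpos
  field_simp
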